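/- If every entry of a column-stochastic matrix M is strictly positive, then any eigenvalue λ with |λ| = 1 satisfies λ = 1. -/

import Mathlib

theorem stmt_7 (n : ℕ) (M : Matrix (Fin n) (Fin n) ℝ)
    (hpos : ∀ i j, 0 < M i j) (hcol : ∀ j, ∑ i, M i j = 1)
    (lam : ℂ) (v : Fin n → ℂ) (hv : v ≠ 0)
    (heig : (M.map (Complex.ofReal)).mulVec v = lam • v)
    (hlam : ‖lam‖ = 1) :
    lam = 1 := by
  classical
  have heig' : ∀ i, ∑ j, (M i j : ℂ) * v j = lam * v i := by
    intro i
    have := congrFun heig i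
    simpa [Matrix.mulVec, dotProduct, Matrix.map] using this
  have h1 : ∀ i, ‖v i‖ ≤ ∑ j, M i j * ‖v j‖ := by
    intro i
    calc ‖v i‖ = ‖lam * v i‖ := by rw [norm_mul, hlam, one_mul]
      _ = ‖∑ j, (M i j : ℂ) * v j‖ := by rw [heig' i]
      _ ≤ ∑ j, ‖(M i j : ℂ) * v j‖ := norm_sum_le _ _
      _ = ∑ j, M i j * ‖v j‖ := by
          refine Finset.sum_congr rfl fun j _ => ?_
          rw [norm_mul, Complex.norm_real, Real.norm_eq_abs, abs_of_pos (hpos i j)]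
  have key : ∀ i, ∑ j, M i j * ‖v j‖ = ‖v i‖ := by
    have hsum : ∑ i, (∑ j, M i j * ‖v j‖ - ‖v i‖) = 0 := by
      rw [Finset.sum_sub_distrib, Finset.sum_comm]
      simp [← Finset.sum_mul, hcol]
    have h0 := (Finset.sum_eq_zero_iff_of_nonneg
      (fun i _ => sub_nonneg.2 (h1 i))).1 hsum
    intro i
    have := h0 i (Finset.mem_univ i)
    linarith
  obtain ⟨j0, hj0⟩ : ∃ j, v j ≠ 0 := Function.ne_iff.mp hv
  have vpos : ∀ i, 0 < ‖v i‖ := by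
    intro i
    rw [← key i]
    have : 0 < M i j0 * ‖v j0‖ :=
      mul_pos (hpos i j0) (by simpa using hj0)
    refine lt_of_lt_of_le this (Finset.single_le_sum (f := fun j => M i j * ‖v j‖) (fun j _ => ?_) (Finset.mem_univ j0))
    exact mul_nonneg (le_of_lt (hpos i j)) (norm_nonneg _)
  -- step 4: fix i, use equality case of triangle inequality
  have hne : Nonempty (Fin n) := ⟨j0⟩
  obtain ⟨i⟩ := hne
  set a : ℝ := ‖v i‖ with ha
  have hapos : 0 < a := vpos i
  set σ : ℂ := lam * v i / a with hσ
  have habs_sigma : ‖σ‖ = 1 := by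
    rw [hσ, norm_div, norm_mul, hlam, one_mul, Complex.norm_real, Real.norm_eq_abs, abs_of_pos hapos]
    field_simp
    rfl
  set t : Fin n → ℂ := fun j => (starRingEnd ℂ) σ * ((M i j : ℂ) * v j) with ht
  have hsumt : ∑ j, t j = (a : ℂ) := by
    rw [ht]
    rw [← Finset.mul_sum, heig' i, hσ]
    rw [map_div₀, map_mul]
    have : (starRingEnd ℂ) lam * (starRingEnd ℂ) (v i) / ((starRingEnd ℂ) (a:ℂ)) * (lam * v i)
        = (lam * (starRingEnd ℂ) lam) * (v i * (starRingEnd ℂ) (v i)) / (a : ℂ) := by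
      rw [Complex.conj_ofReal]; ring
    rw [this, Complex.mul_conj, Complex.mul_conj]
    have h1 : Complex.normSq lam = 1 := by
      rw [Complex.normSq_eq_norm_sq, hlam]; norm_num
    have h2 : Complex.normSq (v i) = a^2 := by
      rw [Complex.normSq_eq_norm_sq, ← ha]
    rw [h1, h2]
    have hane : (a:ℂ) ≠ 0 := Complex.ofReal_ne_zero.2 hapos.ne'
    push_cast
    field_simp
  have hvv : v i * (starRingEnd ℂ) (v i) = (a:ℂ)^2 := by
    rw [Complex.mul_conj]
    norm_cast
    rw [Complex.normSq_eq_norm_sq, ← ha]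
  have hane : (a:ℂ) ≠ 0 := Complex.ofReal_ne_zero.2 hapos.ne'
  have hti : t i = ((M i i * a : ℝ) : ℂ) * (starRingEnd ℂ) lam := by
    rw [ht]; dsimp only
    rw [hσ, map_div₀, map_mul, Complex.conj_ofReal]
    push_cast
    field_simp
    linear_combination ((M i i : ℂ)) * (starRingEnd ℂ) lam * hvv
  have hre_le : ∀ j, (t j).re ≤ M i j * ‖v j‖ := by
    intro j
    refine (Complex.re_le_norm _).trans ?_
    rw [ht]; dsimp only
    rw [norm_mul, Complex.norm_conj, habs_sigma, one_mul, norm_mul,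
      Complex.norm_real, Real.norm_eq_abs, abs_of_pos (hpos i j)]
  have hre_sum : ∑ j, (t j).re = a := by
    rw [← Complex.re_sum, hsumt, Complex.ofReal_re]
  have hzero : ∑ j, (M i j * ‖v j‖ - (t j).re) = 0 := by
    rw [Finset.sum_sub_distrib, key i, hre_sum, ← ha, sub_self]
  have heach := (Finset.sum_eq_zero_iff_of_nonneg
    (fun j _ => sub_nonneg.2 (hre_le j))).1 hzero i (Finset.mem_univ i)
  have hretia : (t i).re = M i i * a := by
    rw [← ha] at heach
    linarith [heach]
  have hre1 : lam.re = 1 := by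
    rw [hti] at hretia
    have : (M i i * a) * lam.re = M i i * a := by
      simpa [Complex.mul_re, Complex.conj_re, Complex.conj_im,
        Complex.ofReal_re, Complex.ofReal_im] using hretia
    have hma : 0 < M i i * a := mul_pos (hpos i i) hapos
    have := mul_left_cancel₀ hma.ne' (by linarith : (M i i * a) * lam.re = (M i i * a) * 1)
    linarith
  have hnormSq : lam.re^2 + lam.im^2 = 1 := by
    have h : Complex.normSq lam = 1 := by
      rw [Complex.normSq_eq_norm_sq, hlam]; norm_num
    rw [Complex.normSq_apply] at h
    nlinarith [h]
  have him : lam.im = 0 := by nlinarith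
  exact Complex.ext hre1 him
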